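/- For any penalty p : [0, ∞) → ℝ that is differentiable on (0, ∞) with p' nonincreasing and nonnegative (i.e., p concave and nondecreasing), the local quadratic approximation q(β) = p(|β₀|) + (1/2)(p'(|β₀|)/|β₀|)(β² − β₀²) majorizes p: q(β) ≥ p(|β|) for all β ∈ ℝ, with equality at |β| = |β₀|. -/

import Mathlib

open Filter Topology Set

lemma lqa_tangent_bound
    (p p' : ℝ → ℝ)
    (hcont : ContinuousOn p (Set.Ici (0:ℝ)))
    (hderiv : ∀ x : ℝ, 0 < x → HasDerivAt p (p' x) x)
    (hanti : AntitoneOn p' (Set.Ioi (0:ℝ)))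
    (a : ℝ) (ha : 0 < a) :
    ∀ t : ℝ, 0 ≤ t → p t ≤ p a + p' a * (t - a) := by
  set g : ℝ → ℝ := fun x => p x - p' a * x with hg
  have hgderiv : ∀ x : ℝ, 0 < x → HasDerivAt g (p' x - p' a) x := by
    intro x hx
    have h1 : HasDerivAt (fun y => p' a * y) (p' a * 1) x :=
      (hasDerivAt_id x).const_mul (p' a)
    have h2 := (hderiv x hx).sub h1
    rw [mul_one] at h2
    exact h2
  have hgcont : ContinuousOn g (Set.Ici (0:ℝ)) :=
    hcont.sub ((continuous_const.mul continuous_id).continuousOn)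
  have hpos : ∀ t : ℝ, 0 < t → p t ≤ p a + p' a * (t - a) := by
    intro t ht
    have hkey : g t ≤ g a := by
      rcases le_total t a with hta | hat
      · -- g monotone on [t, a]
        have hmono : MonotoneOn g (Set.Icc t a) := by
          apply monotoneOn_of_deriv_nonneg (convex_Icc t a)
          · exact hgcont.mono (fun x hx => le_trans ht.le hx.1)
          · intro x hx
            rw [interior_Icc] at hx
            exact ((hgderiv x (lt_trans ht hx.1)).differentiableAt).differentiableWithinAt
          · intro x hx
            rw [interior_Icc] at hx
            have hx0 : (0:ℝ) < x := lt_trans ht hx.1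
            rw [(hgderiv x hx0).deriv]
            have := hanti (Set.mem_Ioi.mpr hx0) (Set.mem_Ioi.mpr ha) hx.2.le
            linarith
        exact hmono (Set.left_mem_Icc.mpr hta) (Set.right_mem_Icc.mpr hta) hta
      · -- g antitone on [a, t]
        have hmono : AntitoneOn g (Set.Icc a t) := by
          apply antitoneOn_of_deriv_nonpos (convex_Icc a t)
          · exact hgcont.mono (fun x hx => le_trans ha.le hx.1)
          · intro x hx
            rw [interior_Icc] at hx
            exact ((hgderiv x (lt_trans ha hx.1)).differentiableAt).differentiableWithinAt
          · intro x hx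
            rw [interior_Icc] at hx
            have hx0 : (0:ℝ) < x := lt_trans ha hx.1
            rw [(hgderiv x hx0).deriv]
            have := hanti (Set.mem_Ioi.mpr ha) (Set.mem_Ioi.mpr hx0) hx.1.le
            linarith
        exact hmono (Set.left_mem_Icc.mpr hat) (Set.right_mem_Icc.mpr hat) hat
    simp only [hg] at hkey
    linarith
  intro t ht
  rcases ht.lt_or_eq with ht' | ht'
  · exact hpos t ht'
  · subst ht'
    -- limit argument
    have h1 : Tendsto p (𝓝[>] (0:ℝ)) (𝓝 (p 0)) :=
      ((hcont 0 (Set.mem_Ici.mpr le_rfl)).mono_left (nhdsWithin_mono _ Set.Ioi_subset_Ici_self))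
    have h2 : Tendsto (fun x => p a + p' a * (x - a)) (𝓝[>] (0:ℝ))
        (𝓝 (p a + p' a * ((0:ℝ) - a))) := by
      have : Continuous (fun x : ℝ => p a + p' a * (x - a)) := by continuity
      exact (this.tendsto 0).mono_left nhdsWithin_le_nhds
    refine le_of_tendsto_of_tendsto h1 h2 ?_
    filter_upwards [self_mem_nhdsWithin] with x hx
    exact hpos x hx

theorem lqa_majorizes_concave_penalty
    (p p' : ℝ → ℝ)
    (hcont : ContinuousOn p (Set.Ici (0:ℝ)))
    (hderiv : ∀ x : ℝ, 0 < x → HasDerivAt p (p' x) x)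
    (hnonneg : ∀ x : ℝ, 0 < x → 0 ≤ p' x)
    (hanti : AntitoneOn p' (Set.Ioi (0:ℝ)))
    (β₀ : ℝ) (hβ₀ : β₀ ≠ 0)
    (q : ℝ → ℝ)
    (hq : ∀ β : ℝ, q β = p |β₀| + (1/2) * (p' |β₀| / |β₀|) * (β ^ 2 - β₀ ^ 2)) :
    (∀ β : ℝ, p |β| ≤ q β) ∧ (∀ β : ℝ, |β| = |β₀| → q β = p |β|) := by
  have ha : 0 < |β₀| := abs_pos.mpr hβ₀
  set a := |β₀| with haa
  constructor
  · intro β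
    rw [hq]
    have h1 : p |β| ≤ p a + p' a * (|β| - a) :=
      lqa_tangent_bound p p' hcont hderiv hanti a ha |β| (abs_nonneg β)
    have hb : β ^ 2 = |β| ^ 2 := (sq_abs β).symm
    have hb0 : β₀ ^ 2 = a ^ 2 := (sq_abs β₀).symm
    have hinv : a * a⁻¹ = 1 := mul_inv_cancel₀ (ne_of_gt ha)
    have hpa : 0 ≤ p' a := hnonneg a ha
    have h2 : p' a * (|β| - a) ≤ (1/2) * (p' a / a) * (β ^ 2 - β₀ ^ 2) := by
      rw [hb, hb0]
      have key : (1/2) * (p' a / a) * (|β| ^ 2 - a ^ 2) - p' a * (|β| - a)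
          = (p' a / a) * (|β| - a) ^ 2 / 2 := by
        field_simp
        ring
      have hnn : 0 ≤ (p' a / a) * (|β| - a) ^ 2 / 2 :=
        div_nonneg (mul_nonneg (div_nonneg hpa ha.le) (sq_nonneg _)) (by norm_num)
      linarith
    linarith
  · intro β hβ
    rw [hq, hβ]
    have : β ^ 2 = β₀ ^ 2 := by
      rw [← sq_abs β, hβ, haa, sq_abs]
    rw [this]
    ring
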